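/- Let S be a finite nonempty set of positive integers and set s = max S. Then there exists a periodic dominating set D of the distance graph G(S), with period at most (2s)·2^{2s}, such that for every dominating set D' of G(S) one has δ(D) ≤ liminf_{N→∞} |D' ∩ [−N,N]|/(2N+1); that is, the minimum density of a dominating set in G(S) is achieved by a periodic set with period at most (2s)·2^{2s}. -/

import Mathlib

open Filter

/-- The upper density of a set of integers. -/
noncomputable def density (A : Set ℤ) : ℝ :=
  Filter.limsup
    (fun N : ℕ => ((A ∩ Set.Icc (-(N : ℤ)) (N : ℤ)).ncard : ℝ) / (2 * (N : ℝ) + 1))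
    Filter.atTop

/-- The lower density of a set of integers. -/
noncomputable def densityLow (A : Set ℤ) : ℝ :=
  Filter.liminf
    (fun N : ℕ => ((A ∩ Set.Icc (-(N : ℤ)) (N : ℤ)).ncard : ℝ) / (2 * (N : ℝ) + 1))
    Filter.atTop

/-- A set of integers is dominating in the distance graph `G(S)` if every integer is in
the set or adjacent to an element of the set. -/
def IsDomSet (S : Finset ℕ) (D : Set ℤ) : Prop :=
  ∀ z : ℤ, z ∈ D ∨ ∃ s ∈ S, z + (s : ℤ) ∈ D ∨ z - (s : ℤ) ∈ D

noncomputable def cnt (D : Set ℤ) (a b : ℤ) : ℕ :=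
  ∑ x ∈ Finset.Ico a b, D.indicator (fun _ => 1) x

lemma cnt_congr {D D' : Set ℤ} {a b : ℤ} (h : ∀ x, a ≤ x → x < b → (x ∈ D ↔ x ∈ D')) :
    cnt D a b = cnt D' a b := by
  classical
  unfold cnt
  apply Finset.sum_congr rfl
  intro x hx
  rw [Finset.mem_Ico] at hx
  by_cases hm : x ∈ D
  · rw [Set.indicator_of_mem hm, Set.indicator_of_mem ((h x hx.1 hx.2).mp hm)]
  · rw [Set.indicator_of_notMem hm,
      Set.indicator_of_notMem (fun hc => hm ((h x hx.1 hx.2).mpr hc))]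

lemma cnt_split {D : Set ℤ} {a b c : ℤ} (hab : a ≤ b) (hbc : b ≤ c) :
    cnt D a b + cnt D b c = cnt D a c := by
  unfold cnt
  rw [← Finset.Ico_union_Ico_eq_Ico hab hbc,
    Finset.sum_union (Finset.Ico_disjoint_Ico_consecutive a b c)]

lemma cnt_shift {D : Set ℤ} (p : ℕ) (hper : ∀ z : ℤ, z + (p:ℤ) ∈ D ↔ z ∈ D) (a b : ℤ) :
    cnt D (a + p) (b + p) = cnt D a b := by
  classical
  unfold cnt
  rw [← Finset.map_add_right_Ico a b (p:ℤ), Finset.sum_map]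
  apply Finset.sum_congr rfl
  intro x _
  simp only [addRightEmbedding_apply]
  by_cases hm : x ∈ D
  · rw [Set.indicator_of_mem hm, Set.indicator_of_mem ((hper x).mpr hm)]
  · rw [Set.indicator_of_notMem hm, Set.indicator_of_notMem (fun hc => hm ((hper x).mp hc))]

lemma cnt_mono {D : Set ℤ} {a b a' b' : ℤ} (ha : a' ≤ a) (hb : b ≤ b') :
    cnt D a b ≤ cnt D a' b' := by
  unfold cnt
  apply Finset.sum_le_sum_of_subset
  exact Finset.Ico_subset_Ico ha hb

lemma cnt_le_length {D : Set ℤ} (a b : ℤ) : cnt D a b ≤ (b - a).toNat := by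
  unfold cnt
  calc ∑ x ∈ Finset.Ico a b, D.indicator (fun _ => 1) x
      ≤ ∑ _x ∈ Finset.Ico a b, 1 := by
        apply Finset.sum_le_sum
        intro x _
        exact Set.indicator_apply_le' (fun _ => le_refl 1) (fun _ => Nat.zero_le 1)
    _ = (b - a).toNat := by rw [Finset.sum_const, smul_eq_mul, mul_one, Int.card_Ico]

lemma ncard_bridge (A : Set ℤ) (N : ℕ) :
    (A ∩ Set.Icc (-(N : ℤ)) (N : ℤ)).ncard = cnt A (-(N:ℤ)) ((N:ℤ)+1) := by
  classical
  have h : A ∩ Set.Icc (-(N : ℤ)) (N : ℤ)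
      = ((Finset.Ico (-(N:ℤ)) ((N:ℤ)+1)).filter (· ∈ A) : Finset ℤ) := by
    ext x
    simp only [Set.mem_inter_iff, Set.mem_Icc, Finset.coe_filter, Finset.mem_Ico,
      Set.mem_setOf_eq]
    constructor
    · rintro ⟨h1, h2, h3⟩; exact ⟨⟨h2, by omega⟩, h1⟩
    · rintro ⟨⟨h2, h3⟩, h1⟩; exact ⟨h1, h2, by omega⟩
  rw [h, Set.ncard_coe_finset, Finset.card_filter]
  apply Finset.sum_congr rfl
  intro x _
  by_cases hm : x ∈ A
  · simp [hm]
  · simp [hm]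

lemma cnt_const {D : Set ℤ} {p : ℕ} (hp : 0 < p) (hper : ∀ z : ℤ, z + (p:ℤ) ∈ D ↔ z ∈ D) (x : ℤ) :
    cnt D x (x + p) = cnt D 0 p := by
  have step : ∀ x : ℤ, cnt D (x+1) (x + 1 + p) = cnt D x (x + p) := by
    intro x
    have h1 : cnt D x (x+1) + cnt D (x+1) (x+1+p) = cnt D x (x+1+p) :=
      cnt_split (by omega) (by omega)
    have h2 : cnt D x (x+p) + cnt D (x+p) (x+1+p) = cnt D x (x+1+p) :=
      cnt_split (by omega) (by omega)
    have h3 : cnt D (x + p) (x + 1 + p) = cnt D x (x+1) := cnt_shift p hper x (x+1)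
    omega
  have key : ∀ x : ℤ, cnt D x (x + p) = cnt D 0 (0 + p) := by
    intro x
    induction x using Int.induction_on with
    | zero => rfl
    | succ n ih => rw [show ((n:ℤ)+1) = (n:ℤ)+1 from rfl, step n, ih]
    | pred n ih =>
        rw [← ih, ← step (-(n:ℤ)-1)]
        norm_num
  have := key x
  rwa [zero_add] at this

lemma cnt_multi {D : Set ℤ} {p : ℕ} (hp : 0 < p) (hper : ∀ z : ℤ, z + (p:ℤ) ∈ D ↔ z ∈ D) (x : ℤ) (k : ℕ) :
    cnt D x (x + k * p) = k * cnt D 0 p := by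
  induction k with
  | zero => simp [cnt]
  | succ k ih =>
      have e : x + ((k+1:ℕ):ℤ)*(p:ℤ) = (x + (k:ℤ)*p) + p := by push_cast; ring
      rw [e]
      have h1 : cnt D x (x + (k:ℤ)*p) + cnt D (x + (k:ℤ)*p) ((x + (k:ℤ)*p) + p)
          = cnt D x ((x + (k:ℤ)*p) + p) :=
        cnt_split (by nlinarith [Int.natCast_nonneg k, Int.natCast_nonneg p]) (by omega)
      have h2 := cnt_const hp hper (x + (k:ℤ)*p)
      rw [Nat.succ_mul]
      omega

lemma tendsto_denom : Tendsto (fun N : ℕ => 2 * (N:ℝ) + 1) atTop atTop := by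
  apply Filter.tendsto_atTop_add_const_right
  exact Tendsto.const_mul_atTop two_pos tendsto_natCast_atTop_atTop

lemma tendsto_aux (C : ℝ) :
    Tendsto (fun N : ℕ => C / (2 * (N:ℝ) + 1)) atTop (nhds 0) := by
  have h := tendsto_denom.inv_tendsto_atTop
  have := h.const_mul C
  rw [mul_zero] at this
  simpa [div_eq_mul_inv] using this


lemma periodic_tendsto {D : Set ℤ} {p : ℕ} (hp : 0 < p)
    (hper : ∀ z : ℤ, z + (p:ℤ) ∈ D ↔ z ∈ D) :
    Tendsto (fun N : ℕ => ((cnt D (-(N:ℤ)) ((N:ℤ)+1)) : ℝ) / (2*(N:ℝ)+1)) atTop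
      (nhds ((cnt D 0 p : ℝ)/p)) := by
  have hcp : cnt D 0 (p:ℤ) ≤ p := by
    have := cnt_le_length (D := D) 0 (p:ℤ)
    omega
  have hp0 : (0:ℝ) < p := by exact_mod_cast hp
  have main : ∀ N : ℕ,
      (cnt D 0 (p:ℤ) : ℝ)/p - (p:ℝ)/(2*(N:ℝ)+1)
        ≤ ((cnt D (-(N:ℤ)) ((N:ℤ)+1)) : ℝ) / (2*(N:ℝ)+1) ∧
      ((cnt D (-(N:ℤ)) ((N:ℤ)+1)) : ℝ) / (2*(N:ℝ)+1)
        ≤ (cnt D 0 (p:ℤ) : ℝ)/p + (p:ℝ)/(2*(N:ℝ)+1) := by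
    intro N
    set k := (2*N+1)/p with hk_def
    have hk1 : k*p ≤ 2*N+1 := Nat.div_mul_le_self _ _
    have hk2 : 2*N+1 < (k+1)*p := by
      have h1 := Nat.div_add_mod (2*N+1) p
      rw [← hk_def] at h1
      have h2 : (2*N+1) % p < p := Nat.mod_lt _ hp
      nlinarith
    have hlo : k * cnt D 0 (p:ℤ) ≤ cnt D (-(N:ℤ)) ((N:ℤ)+1) := by
      rw [← cnt_multi hp hper (-(N:ℤ)) k]
      apply cnt_mono le_rfl
      have : (k:ℤ)*(p:ℤ) ≤ 2*(N:ℤ)+1 := by exact_mod_cast hk1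
      omega
    have hhi : cnt D (-(N:ℤ)) ((N:ℤ)+1) ≤ (k+1) * cnt D 0 (p:ℤ) := by
      rw [← cnt_multi hp hper (-(N:ℤ)) (k+1)]
      apply cnt_mono le_rfl
      have : 2*(N:ℤ)+1 ≤ ((k+1:ℕ):ℤ)*(p:ℤ) := by exact_mod_cast hk2.le
      omega
    have hden : (0:ℝ) < 2*(N:ℝ)+1 := by positivity
    have hloR : ((k:ℝ)) * (cnt D 0 (p:ℤ) : ℝ) ≤ (cnt D (-(N:ℤ)) ((N:ℤ)+1) : ℝ) := by
      exact_mod_cast hlo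
    have hhiR : (cnt D (-(N:ℤ)) ((N:ℤ)+1) : ℝ) ≤ ((k:ℝ)+1) * (cnt D 0 (p:ℤ) : ℝ) := by
      exact_mod_cast hhi
    have hk1R : (k:ℝ)*(p:ℝ) ≤ 2*(N:ℝ)+1 := by exact_mod_cast hk1
    have hk2R : 2*(N:ℝ)+1 ≤ ((k:ℝ)+1)*(p:ℝ) := by exact_mod_cast hk2.le
    have hcpR : (cnt D 0 (p:ℤ) : ℝ) ≤ (p:ℝ) := by exact_mod_cast hcp
    have hc0 : (0:ℝ) ≤ (cnt D 0 (p:ℤ) : ℝ) := by positivity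
    constructor
    · have key : (cnt D 0 (p:ℤ) : ℝ)/p
          ≤ ((cnt D (-(N:ℤ)) ((N:ℤ)+1) : ℝ) + p)/(2*(N:ℝ)+1) := by
        rw [div_le_div_iff₀ hp0 hden]
        nlinarith [mul_le_mul_of_nonneg_right hloR hp0.le,
          mul_le_mul_of_nonneg_left hk2R hc0,
          mul_le_mul_of_nonneg_right hcpR hp0.le]
      rw [add_div] at key
      linarith
    · have key2 : (cnt D (-(N:ℤ)) ((N:ℤ)+1) : ℝ) * p
          ≤ (cnt D 0 (p:ℤ) : ℝ)*(2*(N:ℝ)+1) + (p:ℝ)*(p:ℝ) := by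
        nlinarith [mul_le_mul_of_nonneg_right hhiR hp0.le,
          mul_le_mul_of_nonneg_right hk1R hc0,
          mul_le_mul_of_nonneg_right hcpR hp0.le]
      have heq : (cnt D 0 (p:ℤ) : ℝ)/p + (p:ℝ)/(2*(N:ℝ)+1)
          = ((cnt D 0 (p:ℤ) : ℝ)*(2*(N:ℝ)+1) + (p:ℝ)*(p:ℝ))/((p:ℝ)*(2*(N:ℝ)+1)) := by
        field_simp
      rw [heq, div_le_div_iff₀ hden (by positivity)]
      nlinarith [mul_le_mul_of_nonneg_right key2 hden.le]
  apply tendsto_of_tendsto_of_tendsto_of_le_of_le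
    (g := fun N : ℕ => (cnt D 0 (p:ℤ) : ℝ)/p - (p:ℝ)/(2*(N:ℝ)+1))
    (h := fun N : ℕ => (cnt D 0 (p:ℤ) : ℝ)/p + (p:ℝ)/(2*(N:ℝ)+1))
  · have := (tendsto_const_nhds :
      Tendsto (fun _ : ℕ => (cnt D 0 (p:ℤ):ℝ)/(p:ℝ)) atTop
        (nhds ((cnt D 0 (p:ℤ):ℝ)/(p:ℝ)))).sub (tendsto_aux (p:ℝ))
    simpa using this
  · have := (tendsto_const_nhds :
      Tendsto (fun _ : ℕ => (cnt D 0 (p:ℤ):ℝ)/(p:ℝ)) atTop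
        (nhds ((cnt D 0 (p:ℤ):ℝ)/(p:ℝ)))).add (tendsto_aux (p:ℝ))
    simpa using this
  · exact fun N => (main N).1
  · exact fun N => (main N).2

def perSet (D : Set ℤ) (a : ℤ) (m : ℕ) : Set ℤ := {z | a + (z - a) % (m:ℤ) ∈ D}

lemma perSet_mem_of_lt {D : Set ℤ} {a : ℤ} {m : ℕ} {z : ℤ}
    (h1 : a ≤ z) (h2 : z < a + m) : z ∈ perSet D a m ↔ z ∈ D := by
  unfold perSet
  have he : (z - a) % (m:ℤ) = z - a := Int.emod_eq_of_lt (by omega) (by omega)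
  rw [Set.mem_setOf_eq, he, show a + (z - a) = z by ring]

lemma perSet_period {D : Set ℤ} {a : ℤ} {m : ℕ} (z k : ℤ) :
    z + (m:ℤ) * k ∈ perSet D a m ↔ z ∈ perSet D a m := by
  unfold perSet
  rw [Set.mem_setOf_eq, Set.mem_setOf_eq,
    show z + (m:ℤ)*k - a = (z - a) + (m:ℤ)*k by ring, Int.add_mul_emod_self_left]

lemma dom_of_local {S : Finset ℕ} {D : Set ℤ} {a : ℤ} {m s : ℕ} (hm : 0 < m)
    (hloc : ∀ z' : ℤ, a + s ≤ z' → z' < a + m + s →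
      (z' ∈ perSet D a m ∨ ∃ t ∈ S, (z' + (t:ℤ) ∈ perSet D a m ∨ z' - (t:ℤ) ∈ perSet D a m))) :
    IsDomSet S (perSet D a m) := by
  intro z
  have hm0 : (0:ℤ) < (m:ℤ) := by exact_mod_cast hm
  set r := (z - a - s) % (m:ℤ) with hr_def
  have hr0 : 0 ≤ r := Int.emod_nonneg _ (by omega)
  have hrm : r < m := Int.emod_lt_of_pos _ hm0
  set z' := a + s + r with hz'_def
  have hed := Int.emod_emod_of_dvd
  have hkey : z = z' + (m:ℤ) * ((z - a - s) / m) := by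
    have := Int.emod_add_mul_ediv (z - a - s) (m:ℤ)
    omega
  set k := (z - a - s) / (m:ℤ) with hk_def
  rcases hloc z' (by omega) (by omega) with h | ⟨t, htS, h | h⟩
  · left
    rw [hkey]
    exact (perSet_period z' k).mpr h
  · right
    refine ⟨t, htS, Or.inl ?_⟩
    rw [show z + (t:ℤ) = (z' + t) + (m:ℤ) * k by rw [hkey]; ring]
    exact (perSet_period _ k).mpr h
  · right
    refine ⟨t, htS, Or.inr ?_⟩
    rw [show z - (t:ℤ) = (z' - t) + (m:ℤ) * k by rw [hkey]; ring]
    exact (perSet_period _ k).mpr h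

lemma perSet_agree {D : Set ℤ} {a : ℤ} {m s : ℕ} (hm : 0 < m)
    (hwin : ∀ t : ℤ, 0 ≤ t → t < 2*s → ((a + t ∈ D) ↔ (a + m + t ∈ D))) :
    ∀ n : ℕ, ∀ y : ℤ, y = a + n → (n:ℤ) < m + 2*s → (y ∈ perSet D a m ↔ y ∈ D) := by
  intro n
  induction n using Nat.strong_induction_on with
  | _ n IH =>
    intro y hy hlt
    by_cases hc : (n:ℤ) < m
    · exact perSet_mem_of_lt (by omega) (by omega)
    · push_neg at hc
      have h1 : (y - m) + (m:ℤ) * 1 ∈ perSet D a m ↔ y - m ∈ perSet D a m := perSet_period _ _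
      rw [show (y - (m:ℤ)) + (m:ℤ) * 1 = y by ring] at h1
      have h2 : y - m ∈ perSet D a m ↔ y - m ∈ D := by
        apply IH (n - m) (by omega) (y - m) (by push_cast; omega) (by push_cast; omega)
      have h3 : y - m ∈ D ↔ y ∈ D := by
        have := hwin ((n:ℤ) - m) (by omega) (by push_cast at hlt ⊢; omega)
        rw [show a + ((n:ℤ) - m) = y - m by omega, show a + m + ((n:ℤ) - m) = y by omega] at this
        exact this
      rw [h1, h2, h3]

lemma splice_dom {S : Finset ℕ} {D : Set ℤ} {a : ℤ} {m s : ℕ} (hm : 0 < m)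
    (hs : ∀ t ∈ S, t ≤ s) (hD : IsDomSet S D)
    (hwin : ∀ t : ℤ, 0 ≤ t → t < 2*s → ((a + t ∈ D) ↔ (a + m + t ∈ D))) :
    IsDomSet S (perSet D a m) := by
  have agree : ∀ y : ℤ, a ≤ y → y < a + m + 2*s → (y ∈ perSet D a m ↔ y ∈ D) := by
    intro y h1 h2
    exact perSet_agree hm hwin (y - a).toNat y (by omega) (by omega)
  apply dom_of_local (s := s) hm
  intro z' h1 h2
  rcases hD z' with h | ⟨t, htS, h | h⟩
  · left
    exact (agree z' (by omega) (by omega)).mpr h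
  · have ht : (t:ℤ) ≤ s := by exact_mod_cast hs t htS
    have ht0 : (0:ℤ) ≤ t := Int.natCast_nonneg t
    right
    exact ⟨t, htS, Or.inl ((agree _ (by omega) (by omega)).mpr h)⟩
  · have ht : (t:ℤ) ≤ s := by exact_mod_cast hs t htS
    have ht0 : (0:ℤ) ≤ t := Int.natCast_nonneg t
    right
    exact ⟨t, htS, Or.inr ((agree _ (by omega) (by omega)).mpr h)⟩

lemma perSet_period' {D : Set ℤ} {a : ℤ} {m : ℕ} (z : ℤ) :
    z + (m:ℤ) ∈ perSet D a m ↔ z ∈ perSet D a m := by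
  have := perSet_period (D := D) (a := a) (m := m) z 1
  rwa [mul_one] at this

lemma window_repeat (D : Set ℤ) (s : ℕ) :
    ∃ i j : ℕ, i < j ∧ j ≤ 2^(2*s) ∧
      ∀ t : ℤ, 0 ≤ t → t < 2*(s:ℤ) → (((i:ℤ) + t ∈ D) ↔ ((j:ℤ) + t ∈ D)) := by
  classical
  have hcard : (Finset.univ : Finset (Fin (2*s) → Bool)).card
      < (Finset.range (2^(2*s)+1)).card := by
    rw [Finset.card_univ, Finset.card_range]
    rw [Fintype.card_fun]
    simp [Nat.pow_lt_pow_succ]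
  obtain ⟨x, hx, y, hy, hne, heq⟩ :=
    Finset.exists_ne_map_eq_of_card_lt_of_maps_to hcard
      (f := fun n (t : Fin (2*s)) => decide (((n:ℤ) + ((t:ℕ):ℤ)) ∈ D))
      (fun a _ => Finset.mem_univ _)
  rw [Finset.mem_range] at hx hy
  have key : ∀ u v : ℕ,
      ((fun (t : Fin (2*s)) => decide (((u:ℤ) + ((t:ℕ):ℤ)) ∈ D))
        = fun (t : Fin (2*s)) => decide (((v:ℤ) + ((t:ℕ):ℤ)) ∈ D)) →
      ∀ t : ℤ, 0 ≤ t → t < 2*(s:ℤ) → (((u:ℤ) + t ∈ D) ↔ ((v:ℤ) + t ∈ D)) := by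
    intro u v hf t ht0 ht2
    have htn : (t.toNat : ℤ) = t := Int.toNat_of_nonneg ht0
    have := congrFun hf ⟨t.toNat, by omega⟩
    simp only [decide_eq_decide] at this
    rwa [htn] at this
  rcases lt_or_gt_of_ne hne with h | h
  · exact ⟨x, y, h, by omega, key x y heq⟩
  · exact ⟨y, x, h, by omega, fun t a b => (key x y heq t a b).symm⟩

lemma descent (S : Finset ℕ) (s : ℕ) (hs : ∀ t ∈ S, t ≤ s) :
    ∀ p : ℕ, 0 < p → ∀ D : Set ℤ, IsDomSet S D → (∀ z : ℤ, z + (p:ℤ) ∈ D ↔ z ∈ D) →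
    ∃ (D' : Set ℤ) (p' : ℕ), 0 < p' ∧ p' ≤ 2^(2*s) ∧ IsDomSet S D' ∧
      (∀ z : ℤ, z + (p':ℤ) ∈ D' ↔ z ∈ D') ∧ cnt D' 0 p' * p ≤ cnt D 0 p * p' := by
  intro p
  induction p using Nat.strong_induction_on with
  | _ p IH =>
    intro hp D hD hper
    by_cases hple : p ≤ 2^(2*s)
    · exact ⟨D, p, hp, hple, hD, hper, le_rfl⟩
    · push_neg at hple
      obtain ⟨i, j, hij, hj, hwin⟩ := window_repeat D s
      set m := j - i with hm_def
      have hm : 0 < m := by omega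
      have hmp : m < p := by omega
      have hji : (j:ℤ) = (i:ℤ) + m := by push_cast; omega
      have hsum : cnt D (i:ℤ) (j:ℤ) + cnt D (j:ℤ) ((i:ℤ)+p) = cnt D 0 p := by
        rw [cnt_split (by exact_mod_cast hij.le) (by push_cast; omega)]
        exact cnt_const hp hper (i:ℤ)
      have hwin1 : ∀ t : ℤ, 0 ≤ t → t < 2*(s:ℤ) →
          (((i:ℤ) + t ∈ D) ↔ ((i:ℤ) + m + t ∈ D)) := by
        intro t h1 h2
        rw [← hji]
        exact hwin t h1 h2
      by_cases hcase : cnt D (i:ℤ) (j:ℤ) * p ≤ cnt D 0 p * m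
      · -- use block [i, j)
        refine ⟨perSet D (i:ℤ) m, m, hm, by omega, ?_, perSet_period', ?_⟩
        · exact splice_dom hm hs hD (by exact_mod_cast hwin1)
        · have hcnt : cnt (perSet D (i:ℤ) m) 0 m = cnt D (i:ℤ) (j:ℤ) := by
            rw [← cnt_const (D := perSet D (i:ℤ) m) hm perSet_period' (i:ℤ)]
            conv_rhs => rw [hji]
            apply cnt_congr
            intro x h1 h2
            exact perSet_mem_of_lt h1 h2
          rw [hcnt]
          exact hcase
      · -- cut the block: use [j, i+p)
        push_neg at hcase
        set pm := p - m with hpm_def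
        have hpm : 0 < pm := by omega
        have hwin2 : ∀ t : ℤ, 0 ≤ t → t < 2*(s:ℤ) →
            (((j:ℤ) + t ∈ D) ↔ ((j:ℤ) + pm + t ∈ D)) := by
          intro t h1 h2
          have h3 : (j:ℤ) + pm + t = ((i:ℤ) + t) + p := by push_cast; omega
          rw [h3, hper ((i:ℤ) + t)]
          exact (hwin t h1 h2).symm
        have hE2dom : IsDomSet S (perSet D (j:ℤ) pm) :=
          splice_dom hpm hs hD (by exact_mod_cast hwin2)
        have hE2cnt : cnt (perSet D (j:ℤ) pm) 0 pm = cnt D (j:ℤ) ((i:ℤ)+p) := by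
          rw [← cnt_const (D := perSet D (j:ℤ) pm) hpm perSet_period' (j:ℤ)]
          have h4 : (j:ℤ) + pm = (i:ℤ) + p := by push_cast; omega
          rw [h4]
          apply cnt_congr
          intro x h1 h2
          exact perSet_mem_of_lt h1 (by omega)
        obtain ⟨D'', p'', h1, h2, h3, h4, h5⟩ :=
          IH pm (by omega) hpm (perSet D (j:ℤ) pm) hE2dom perSet_period'
        refine ⟨D'', p'', h1, h2, h3, h4, ?_⟩
        rw [hE2cnt] at h5
        -- from h5 : cnt D'' 0 p'' * pm ≤ c_r * p''  and  c_r * p ≤ c * pm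
        have e1 : cnt D (i:ℤ) (j:ℤ) * p + cnt D (j:ℤ) ((i:ℤ)+p) * p = cnt D 0 p * p := by
          rw [← add_mul, hsum]
        have e2 : cnt D 0 p * m + cnt D 0 p * pm = cnt D 0 p * p := by
          rw [← mul_add]
          congr 1
          omega
        have h6 : cnt D (j:ℤ) ((i:ℤ)+p) * p ≤ cnt D 0 p * pm := by linarith
        have h7 : cnt D'' 0 p'' * p * pm ≤ cnt D 0 p * p'' * pm := by
          calc cnt D'' 0 p'' * p * pm = (cnt D'' 0 p'' * pm) * p := by ring
            _ ≤ (cnt D (j:ℤ) ((i:ℤ)+p) * p'') * p := Nat.mul_le_mul_right _ h5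
            _ = (cnt D (j:ℤ) ((i:ℤ)+p) * p) * p'' := by ring
            _ ≤ (cnt D 0 p * pm) * p'' := Nat.mul_le_mul_right _ h6
            _ = cnt D 0 p * p'' * pm := by ring
        exact Nat.le_of_mul_le_mul_right h7 hpm

lemma padding (S : Finset ℕ) (s : ℕ) (hsS : s ∈ S) (hs : ∀ t ∈ S, t ≤ s) (hs1 : 0 < s)
    (D' : Set ℤ) (hD' : IsDomSet S D') (N : ℕ) :
    ∃ D1 : Set ℤ, IsDomSet S D1 ∧ (∀ z : ℤ, z + ((2*N+1+2*s : ℕ):ℤ) ∈ D1 ↔ z ∈ D1) ∧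
      cnt D1 0 ((2*N+1+2*s : ℕ):ℤ) ≤ cnt D' (-(N:ℤ)) ((N:ℤ)+1) + 2*s := by
  set q : ℕ := 2*N+1+2*s with hq_def
  have hq : 0 < q := by omega
  have hqz : ((q:ℕ):ℤ) = 2*(N:ℤ)+1+2*(s:ℤ) := by push_cast; omega
  set a : ℤ := -(N:ℤ) with ha_def
  set Dpad : Set ℤ := (D' ∩ Set.Icc (-(N:ℤ)) (N:ℤ)) ∪ Set.Icc ((N:ℤ)+1) ((N:ℤ)+2*s)
    with hDpad_def
  have hmem : ∀ y : ℤ, a ≤ y → y < a + q → (y ∈ perSet Dpad a q ↔ y ∈ Dpad) :=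
    fun y h1 h2 => perSet_mem_of_lt h1 h2
  refine ⟨perSet Dpad a q, ?_, perSet_period', ?_⟩
  · apply dom_of_local (s := s) hq
    intro z' h1 h2
    rw [hqz] at h2
    by_cases hA : z' ≤ (N:ℤ) - s
    · rcases hD' z' with h | ⟨t, htS, h | h⟩
      · left
        refine (hmem z' (by omega) (by rw [hqz]; omega)).mpr (Or.inl ⟨h, ?_⟩)
        rw [Set.mem_Icc]
        omega
      · have ht : (t:ℤ) ≤ s := by exact_mod_cast hs t htS
        have ht0 : (0:ℤ) ≤ t := Int.natCast_nonneg t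
        refine Or.inr ⟨t, htS, Or.inl ?_⟩
        refine (hmem _ (by omega) (by rw [hqz]; omega)).mpr (Or.inl ⟨h, ?_⟩)
        rw [Set.mem_Icc]
        omega
      · have ht : (t:ℤ) ≤ s := by exact_mod_cast hs t htS
        have ht0 : (0:ℤ) ≤ t := Int.natCast_nonneg t
        refine Or.inr ⟨t, htS, Or.inr ?_⟩
        refine (hmem _ (by omega) (by rw [hqz]; omega)).mpr (Or.inl ⟨h, ?_⟩)
        rw [Set.mem_Icc]
        omega
    · by_cases hB : z' ≤ (N:ℤ) + s
      · refine Or.inr ⟨s, hsS, Or.inl ?_⟩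
        refine (hmem _ (by omega) (by rw [hqz]; omega)).mpr (Or.inr ?_)
        rw [Set.mem_Icc]
        omega
      · refine Or.inr ⟨s, hsS, Or.inr ?_⟩
        refine (hmem _ (by omega) (by rw [hqz]; omega)).mpr (Or.inr ?_)
        rw [Set.mem_Icc]
        omega
  · have h1 : cnt (perSet Dpad a q) 0 (q:ℤ) = cnt Dpad a (a + q) := by
      rw [← cnt_const (D := perSet Dpad a q) hq perSet_period' a]
      exact cnt_congr (fun x hx1 hx2 => hmem x hx1 hx2)
    have h2 : cnt Dpad a ((N:ℤ)+1) + cnt Dpad ((N:ℤ)+1) (a + q) = cnt Dpad a (a + q) := by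
      apply cnt_split (by omega) (by rw [hqz]; omega)
    have h3 : cnt Dpad a ((N:ℤ)+1) = cnt D' a ((N:ℤ)+1) := by
      apply cnt_congr
      intro x hx1 hx2
      rw [hDpad_def]
      simp only [Set.mem_union, Set.mem_inter_iff, Set.mem_Icc]
      constructor
      · rintro (⟨h, _⟩ | ⟨h, _⟩)
        · exact h
        · omega
      · intro h
        exact Or.inl ⟨h, by omega⟩
    have h4 : cnt Dpad ((N:ℤ)+1) (a + q) ≤ 2*s := by
      have := cnt_le_length (D := Dpad) ((N:ℤ)+1) (a + q)
      have h5 : a + q - ((N:ℤ)+1) = 2*s := by rw [hqz]; omega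
      rw [h5] at this
      omega
    omega

/-- The minimum density of a dominating set of `G(S)` is achieved by a periodic
dominating set with period at most `(2s) * 2 ^ (2s)` where `s = max S`. -/
theorem exists_periodic_min_density_dominating_set
    (S : Finset ℕ) (hS : S.Nonempty) (hSpos : ∀ n ∈ S, 0 < n) :
    ∃ (D : Set ℤ) (p : ℕ),
      IsDomSet S D ∧
      0 < p ∧ p ≤ (2 * S.max' hS) * 2 ^ (2 * S.max' hS) ∧
      (∀ z : ℤ, z + (p : ℤ) ∈ D ↔ z ∈ D) ∧
      ∀ D' : Set ℤ, IsDomSet S D' → density D ≤ densityLow D' := by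
  classical
  set s := S.max' hS with hs_def
  have hsS : s ∈ S := S.max'_mem hS
  have hs : ∀ t ∈ S, t ≤ s := fun t ht => S.le_max' t ht
  have hs1 : 0 < s := hSpos s hsS
  obtain ⟨P, hP_def⟩ : ∃ P : ℕ, P = 2*s*2^(2*s) := ⟨_, rfl⟩
  have hPle : 2^(2*s) ≤ P := by
    rw [hP_def]
    exact Nat.le_mul_of_pos_left _ (by omega)
  have hP0 : 0 < P := by
    rw [hP_def]
    positivity
  have hbridge : ∀ A : Set ℤ,
      (fun N : ℕ => ((A ∩ Set.Icc (-(N : ℤ)) (N : ℤ)).ncard : ℝ) / (2 * (N : ℝ) + 1))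
      = fun N : ℕ => ((cnt A (-(N:ℤ)) ((N:ℤ)+1)) : ℝ) / (2*(N:ℝ)+1) := by
    intro A
    funext N
    rw [ncard_bridge]
  set F := ((Finset.range (P+1)) ×ˢ (Finset.range (P+1))).filter
    (fun q : ℕ × ℕ => 0 < q.2 ∧ ∃ D : Set ℤ, IsDomSet S D ∧
      (∀ z : ℤ, z + (q.2:ℤ) ∈ D ↔ z ∈ D) ∧ cnt D 0 q.2 = q.1) with hF_def
  have hFne : ((1,1) : ℕ × ℕ) ∈ F := by
    simp only [hF_def, Finset.mem_filter, Finset.mem_product, Finset.mem_range]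
    refine ⟨⟨by omega, by omega⟩, by omega, Set.univ, fun z => Or.inl trivial,
      fun z => by simp, ?_⟩
    show cnt Set.univ 0 ((1:ℕ):ℤ) = 1
    simp [cnt]
  obtain ⟨b, hbF, hbmin⟩ := F.exists_min_image (fun q => (q.1:ℝ)/(q.2:ℝ)) ⟨(1,1), hFne⟩
  simp only [hF_def, Finset.mem_filter, Finset.mem_product, Finset.mem_range] at hbF
  obtain ⟨⟨hb1, hb2⟩, hbpos, Dstar, hDdom, hDper, hDcnt⟩ := hbF
  have hb2P : b.2 ≤ P := by omega
  have hb2pos : (0:ℝ) < b.2 := by exact_mod_cast hbpos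
  have hdens : density Dstar = (b.1 : ℝ)/(b.2 : ℝ) := by
    rw [density, hbridge Dstar]
    have := (periodic_tendsto hbpos hDper).limsup_eq
    rw [this, hDcnt]
  refine ⟨Dstar, b.2, hDdom, hbpos, by rw [← hP_def]; exact hb2P, hDper, ?_⟩
  intro D' hD'dom
  by_contra hcon
  push_neg at hcon
  rw [hdens] at hcon
  set d := densityLow D' with hd_def
  set ε := ((b.1:ℝ)/(b.2:ℝ) - d)/2 with hε_def
  have hε : 0 < ε := by rw [hε_def]; linarith
  have hliminf : Filter.liminf
      (fun N : ℕ => ((cnt D' (-(N:ℤ)) ((N:ℤ)+1)) : ℝ) / (2*(N:ℝ)+1)) atTop = d := by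
    rw [hd_def, densityLow, hbridge D']
  have hbd2 : IsBoundedUnder (· ≤ ·) atTop
      (fun N : ℕ => ((cnt D' (-(N:ℤ)) ((N:ℤ)+1)) : ℝ) / (2*(N:ℝ)+1)) := by
    apply isBoundedUnder_of
    refine ⟨1, fun N => ?_⟩
    have hden : (0:ℝ) < 2*(N:ℝ)+1 := by positivity
    rw [div_le_one hden]
    have h := cnt_le_length (D := D') (-(N:ℤ)) ((N:ℤ)+1)
    have h2 : ((N:ℤ)+1 - (-(N:ℤ))).toNat = 2*N+1 := by omega
    rw [h2] at h
    have := (Nat.cast_le (α := ℝ)).mpr h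
    push_cast at this ⊢
    linarith
  have hfreq : ∃ᶠ N : ℕ in atTop,
      ((cnt D' (-(N:ℤ)) ((N:ℤ)+1)) : ℝ) / (2*(N:ℝ)+1) < d + ε :=
    frequently_lt_of_liminf_lt hbd2.isCoboundedUnder_ge (by rw [hliminf]; linarith)
  have hev : ∀ᶠ N : ℕ in atTop, (2*(s:ℝ)) / (2*(N:ℝ)+1) < ε :=
    (tendsto_aux (2*(s:ℝ))).eventually_lt_const hε
  obtain ⟨N, hN1, hN2⟩ := (hfreq.and_eventually hev).exists
  obtain ⟨D1, hdom1, hper1, hcnt1⟩ := padding S s hsS hs hs1 D' hD'dom N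
  obtain ⟨D2, p2, hp2, hp2le, hdom2, hper2, hcnt2⟩ :=
    descent S s hs (2*N+1+2*s) (by omega) D1 hdom1 hper1
  -- membership of (cnt D2 0 p2, p2) in F
  have hcnt2len : cnt D2 0 (p2:ℤ) ≤ p2 := by
    have := cnt_le_length (D := D2) 0 (p2:ℤ)
    omega
  have hp2P : p2 ≤ P := le_trans hp2le hPle
  have hmem2 : ((cnt D2 0 (p2:ℤ), p2) : ℕ × ℕ) ∈ F := by
    simp only [hF_def, Finset.mem_filter, Finset.mem_product, Finset.mem_range]
    exact ⟨⟨Nat.lt_succ_of_le (le_trans hcnt2len hp2P), Nat.lt_succ_of_le hp2P⟩,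
      hp2, D2, hdom2, hper2, rfl⟩
  have hmin2 := hbmin _ hmem2
  -- chain of inequalities
  have hq0 : (0:ℝ) < ((2*N+1+2*s : ℕ):ℝ) := by positivity
  have hp20 : (0:ℝ) < (p2:ℝ) := by exact_mod_cast hp2
  have hden : (0:ℝ) < 2*(N:ℝ)+1 := by positivity
  have step1 : ((cnt D2 0 (p2:ℤ)):ℝ)/(p2:ℝ) ≤ ((cnt D1 0 ((2*N+1+2*s:ℕ):ℤ)):ℝ)/((2*N+1+2*s:ℕ):ℝ) := by
    rw [div_le_div_iff₀ hp20 hq0]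
    exact_mod_cast hcnt2
  have step2 : ((cnt D1 0 ((2*N+1+2*s:ℕ):ℤ)):ℝ)/((2*N+1+2*s:ℕ):ℝ)
      ≤ (((cnt D' (-(N:ℤ)) ((N:ℤ)+1)):ℝ) + 2*(s:ℝ))/(2*(N:ℝ)+1) := by
    apply div_le_div₀ (by positivity) ?_ hden ?_
    · exact_mod_cast hcnt1
    · push_cast
      linarith
  rw [add_div] at step2
  have step3 : (((cnt D' (-(N:ℤ)) ((N:ℤ)+1)):ℝ))/(2*(N:ℝ)+1) + (2*(s:ℝ))/(2*(N:ℝ)+1)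
      < (d + ε) + ε := by
    apply add_lt_add hN1 hN2
  have hfinal : ((cnt D2 0 (p2:ℤ)):ℝ)/(p2:ℝ) < (b.1:ℝ)/(b.2:ℝ) := by
    have : d + ε + ε = (b.1:ℝ)/(b.2:ℝ) := by rw [hε_def]; ring
    linarith
  simp only at hmin2
  linarith
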